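/- Let N ≥ 1 and let (d_i) be the canonical Pell representation of N, i.e., N = Σ d_i P_{i+1} with d_0 ∈ {0,1}, d_i ∈ {0,1,2}, and d_i = 2 implying d_{i−1} = 0. Let k be the least index i with d_i ≠ 0 (the number of trailing zeros of the representation). Then c_α[N] = 1 if and only if k is odd, where α = √2 − 1. -/

import Mathlib

/-- The Pell numbers: `P 0 = 0`, `P 1 = 1`, `P (n+2) = 2 * P (n+1) + P n`. -/
def pell : ℕ → ℕ
  | 0 => 0
  | 1 => 1
  | n + 2 => 2 * pell (n + 1) + pell n

/-- The characteristic Sturmian word with slope `α = √2 - 1`, indexed from 1: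
`c_α[n] = ⌊α(n+1)⌋ - ⌊αn⌋`. -/
noncomputable def calpha (n : ℕ) : ℤ :=
  ⌊(Real.sqrt 2 - 1) * ((n : ℝ) + 1)⌋ - ⌊(Real.sqrt 2 - 1) * (n : ℝ)⌋

/-- `zcount m` = number of indices `1 ≤ j ≤ m` with `c_α[j] = 0`. -/
noncomputable def zcount (m : ℕ) : ℕ :=
  ((Finset.Icc 1 m).filter fun j => calpha j = 0).card

/-- `ocount m` = number of indices `1 ≤ j ≤ m` with `c_α[j] = 1`. -/
noncomputable def ocount (m : ℕ) : ℕ :=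
  ((Finset.Icc 1 m).filter fun j => calpha j = 1).card

noncomputable def aa : ℝ := Real.sqrt 2 - 1

lemma aa_sq : aa ^ 2 = 1 - 2 * aa := by
  have h2 : Real.sqrt 2 ^ 2 = 2 := Real.sq_sqrt (by norm_num)
  unfold aa; linear_combination h2

lemma aa_pos : 0 < aa := by
  have h2 : Real.sqrt 2 ^ 2 = 2 := Real.sq_sqrt (by norm_num)
  have h0 : 0 ≤ Real.sqrt 2 := Real.sqrt_nonneg 2
  unfold aa; nlinarith

lemma aa_lt_half : aa < 1 / 2 := by
  have h2 : Real.sqrt 2 ^ 2 = 2 := Real.sq_sqrt (by norm_num)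
  have h0 : 0 ≤ Real.sqrt 2 := Real.sqrt_nonneg 2
  unfold aa; nlinarith

lemma pell_id (i : ℕ) :
    aa * (pell (i + 1) : ℝ) = (pell i : ℝ) + (-1) ^ i * aa ^ (i + 1) := by
  induction i using Nat.twoStepInduction with
  | zero => simp [pell]
  | one =>
      have h2 : (pell 2 : ℝ) = 2 := by norm_num [pell]
      have h1 : (pell 1 : ℝ) = 1 := by norm_num [pell]
      rw [h2, h1]
      linear_combination aa_sq
  | more i ih1 ih2 =>
      have hp : (pell (i + 2 + 1) : ℝ) = 2 * pell (i + 2) + pell (i + 1) := by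
        norm_num [pell]
      have hq : (pell (i + 2) : ℝ) = 2 * pell (i + 1) + pell i := by
        norm_num [pell]
      rw [hp]
      linear_combination 2*ih2 + ih1 - hq - ((-1)^i * aa^(i+1)) * aa_sq

lemma floor_nat_add (M : ℕ) (x : ℝ) (h0 : 0 ≤ x) (h1 : x < 1) : ⌊(M : ℝ) + x⌋ = M := by
  rw [add_comm, Int.floor_add_natCast, Int.floor_eq_zero_iff.mpr ⟨h0, h1⟩, zero_add]

lemma floor_nat_sub (M : ℕ) (x : ℝ) (h0 : 0 < x) (h1 : x ≤ 1) : ⌊(M : ℝ) - x⌋ = (M : ℤ) - 1 := by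
  rw [sub_eq_add_neg, add_comm, Int.floor_add_natCast]
  have : ⌊-x⌋ = -1 := by
    rw [Int.floor_eq_iff]
    push_cast
    constructor <;> linarith
  rw [this]
  ring


/-- If `d` is the canonical Pell representation of `N ≥ 1` and `k` is the least index
with `d k ≠ 0`, then `c_α[N] = 1` if and only if `k` is odd. -/
theorem calpha_eq_one_iff_odd_trailing_zeros (N : ℕ) (hN : 1 ≤ N) (d : ℕ →₀ ℕ)
    (hsum : (d.sum fun i c => c * pell (i + 1)) = N)
    (hd0 : d 0 ≤ 1) (hle : ∀ i, d i ≤ 2)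
    (hcarry : ∀ i, 1 ≤ i → d i = 2 → d (i - 1) = 0)
    (k : ℕ) (hk : d k ≠ 0) (hmin : ∀ i, i < k → d i = 0) :
    calpha N = 1 ↔ Odd k := by
  set B : ℕ := d.support.sup id + 1 with hBdef
  have hB : ∀ i, B ≤ i → d i = 0 := by
    intro i hi
    by_contra h
    have hm : i ∈ d.support := Finsupp.mem_support_iff.mpr h
    have := Finset.le_sup (f := id) hm
    simp only [id] at this
    omega
  have hkB : k < B := by
    by_contra h
    exact hk (hB k (by omega))
  set g : ℕ → ℝ := fun m => (-1 : ℝ) ^ m * ∑ i ∈ Finset.Ico m B, (d i : ℝ) * (-1) ^ i * aa ^ (i + 1) with hgdef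
  have hg0 : ∀ m, B ≤ m → g m = 0 := by
    intro m hm
    simp [hgdef, Finset.Ico_eq_empty_of_le hm]
  have hgrec : ∀ m, m < B → g m = (d m : ℝ) * aa ^ (m + 1) - g (m + 1) := by
    intro m hm
    have h := Finset.sum_eq_sum_Ico_succ_bot hm (fun i => (d i : ℝ) * (-1) ^ i * aa ^ (i + 1))
    have hs : ((-1:ℝ)) ^ m * (-1) ^ m = 1 := by
      rw [← pow_add]
      exact Even.neg_one_pow ⟨m, by ring⟩
    simp only [hgdef]
    rw [h]
    linear_combination ((d m : ℝ) * aa ^ (m + 1)) * hs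
  -- key invariant
  have key : ∀ n m, B ≤ m + n →
      -(aa ^ (m + 1)) < g m ∧ g m < aa ^ m ∧ (1 ≤ d m → 0 < g m) := by
    intro n
    induction n with
    | zero =>
        intro m hm
        rw [hg0 m (by omega)]
        refine ⟨neg_neg_of_pos (pow_pos aa_pos _), pow_pos aa_pos m, ?_⟩
        intro h
        rw [hB m (by omega)] at h
        omega
    | succ n IH =>
        intro m hm
        by_cases hmB : B ≤ m
        · rw [hg0 m hmB]
          refine ⟨neg_neg_of_pos (pow_pos aa_pos _), pow_pos aa_pos m, ?_⟩
          intro h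
          rw [hB m hmB] at h
          omega
        · push_neg at hmB
          obtain ⟨hL, hU, _⟩ := IH (m + 1) (by omega)
          rw [hgrec m hmB]
          have hpm : (0:ℝ) < aa ^ m := pow_pos aa_pos m
          have ha := aa_pos
          have hh := aa_lt_half
          have e1 : aa ^ (m + 1) = aa ^ m * aa := pow_succ aa m
          have e2 : aa ^ (m + 1 + 1) = aa ^ m * (1 - 2 * aa) := by
            have hsq : aa * aa = 1 - 2 * aa := by nlinarith [aa_sq]
            rw [pow_succ, pow_succ, mul_assoc, hsq]
          rw [e2] at hL
          rw [e1] at hU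
          rw [e1]
          have hd2 : d m = 0 ∨ d m = 1 ∨ d m = 2 := by have := hle m; omega
          have hXa : (0:ℝ) < aa ^ m * aa := mul_pos hpm ha
          rcases hd2 with h | h | h <;> rw [h] <;> push_cast
          · refine ⟨by nlinarith, by nlinarith, ?_⟩
            intro h1
            simp at h1
          · refine ⟨by nlinarith, by nlinarith, ?_⟩
            intro _
            nlinarith
          · refine ⟨by nlinarith, by nlinarith, ?_⟩
            intro _
            nlinarith
  -- sum identity
  have hsupp : d.support ⊆ Finset.range B := by
    intro i hi
    rw [Finset.mem_range]
    by_contra h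
    exact (Finsupp.mem_support_iff.mp hi) (hB i (by omega))
  have hNnat : (∑ i ∈ Finset.range B, d i * pell (i + 1)) = N := by
    rw [← hsum]
    exact (Finsupp.sum_of_support_subset d hsupp (fun i c => c * pell (i + 1)) (fun _ _ => zero_mul _)).symm
  have hNsum : (N : ℝ) = ∑ i ∈ Finset.range B, (d i : ℝ) * pell (i + 1) := by
    rw [← hNnat]
    push_cast
    rfl
  set M : ℕ := ∑ i ∈ Finset.range B, d i * pell i with hMdef
  obtain ⟨hGl, hGu, hGpos'⟩ := key B k (by omega)
  have hGpos : 0 < g k := hGpos' (Nat.one_le_iff_ne_zero.mpr hk)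
  have haN : aa * (N : ℝ) = (M : ℝ) + (-1) ^ k * g k := by
    have hgk : (-1 : ℝ) ^ k * g k = ∑ i ∈ Finset.Ico k B, (d i : ℝ) * (-1) ^ i * aa ^ (i + 1) := by
      simp only [hgdef]
      rw [← mul_assoc, ← pow_add, Even.neg_one_pow ⟨k, by ring⟩, one_mul]
    have hzero : ∑ i ∈ Finset.Ico 0 k, (d i : ℝ) * (-1) ^ i * aa ^ (i + 1) = 0 :=
      Finset.sum_eq_zero fun i hi => by
        rw [hmin i (Finset.mem_Ico.mp hi).2]; simp
    have hsplit : ∑ i ∈ Finset.Ico 0 B, (d i : ℝ) * (-1) ^ i * aa ^ (i + 1)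
        = ∑ i ∈ Finset.Ico 0 k, (d i : ℝ) * (-1) ^ i * aa ^ (i + 1)
          + ∑ i ∈ Finset.Ico k B, (d i : ℝ) * (-1) ^ i * aa ^ (i + 1) :=
      (Finset.sum_Ico_consecutive _ (Nat.zero_le k) hkB.le).symm
    calc aa * (N : ℝ) = ∑ i ∈ Finset.range B, (d i : ℝ) * (aa * pell (i + 1)) := by
          rw [hNsum, Finset.mul_sum]
          exact Finset.sum_congr rfl fun i _ => by ring
      _ = ∑ i ∈ Finset.range B, ((d i : ℝ) * pell i + (d i : ℝ) * (-1) ^ i * aa ^ (i + 1)) :=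
          Finset.sum_congr rfl fun i _ => by rw [pell_id i]; ring
      _ = (M : ℝ) + ∑ i ∈ Finset.range B, (d i : ℝ) * (-1) ^ i * aa ^ (i + 1) := by
          rw [Finset.sum_add_distrib, hMdef]
          push_cast
          rfl
      _ = (M : ℝ) + (-1) ^ k * g k := by
          rw [Finset.range_eq_Ico, hsplit, hzero, hgk, zero_add]
  have hcal : calpha N = ⌊aa * (N : ℝ) + aa⌋ - ⌊aa * (N : ℝ)⌋ := by
    have h1 : aa * ((N : ℝ) + 1) = aa * (N : ℝ) + aa := by ring
    show ⌊aa * ((N : ℝ) + 1)⌋ - ⌊aa * (N : ℝ)⌋ = _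
    rw [h1]
  have ha := aa_pos
  have hh := aa_lt_half
  rcases Nat.even_or_odd k with he | ho
  · -- even: calpha N = 0
    have hpow : (-1 : ℝ) ^ k = 1 := he.neg_one_pow
    rw [hpow, one_mul] at haN
    have hlt1 : g k + aa < 1 := by
      rcases Nat.eq_zero_or_pos k with hk0 | hk1
      · subst hk0
        have hg1 := (key B 1 (by omega)).1
        have hr := hgrec 0 hkB
        have hd01 : d 0 = 1 := by
          have := Nat.one_le_iff_ne_zero.mpr hk
          omega
        rw [hd01] at hr
        push_cast at hr
        have e2 : aa ^ (1 + 1) = aa ^ 2 := by norm_num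
        have e1 : aa ^ 1 = aa := pow_one aa
        rw [e2] at hg1
        rw [e1] at hr
        linarith only [aa_sq, hg1, hr]
      · have hk2 : 2 ≤ k := by
          rcases he with ⟨j, hj⟩
          omega
        have : aa ^ k ≤ aa ^ 2 := pow_le_pow_of_le_one ha.le (by linarith) hk2
        linarith only [aa_sq, hGu, this, ha]
    have f1 : ⌊aa * (N : ℝ)⌋ = (M : ℤ) := by
      rw [haN]
      exact floor_nat_add M (g k) hGpos.le (by linarith only [hlt1, ha])
    have f2 : ⌊aa * (N : ℝ) + aa⌋ = (M : ℤ) := by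
      rw [haN, add_assoc]
      exact floor_nat_add M (g k + aa) (by linarith only [hGpos, ha]) hlt1
    rw [hcal, f1, f2]
    simp only [sub_self]
    exact iff_of_false (by norm_num) (Nat.not_odd_iff_even.mpr he)
  · -- odd: calpha N = 1
    have hpow : (-1 : ℝ) ^ k = -1 := ho.neg_one_pow
    rw [hpow] at haN
    have hk1 : 1 ≤ k := by
      rcases ho with ⟨j, hj⟩
      omega
    have hGa : g k < aa := by
      have : aa ^ k ≤ aa ^ 1 := pow_le_pow_of_le_one ha.le (by linarith) hk1
      rw [pow_one] at this
      linarith [hGu]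
    have haN' : aa * (N : ℝ) = (M : ℝ) - g k := by rw [haN]; ring
    have f1 : ⌊aa * (N : ℝ)⌋ = (M : ℤ) - 1 := by
      rw [haN']
      exact floor_nat_sub M (g k) hGpos (by linarith only [hGa, hh])
    have f2 : ⌊aa * (N : ℝ) + aa⌋ = (M : ℤ) := by
      rw [haN']
      have : (M : ℝ) - g k + aa = (M : ℝ) + (aa - g k) := by ring
      rw [this]
      exact floor_nat_add M (aa - g k) (by linarith only [hGa]) (by linarith only [hGpos, hh])
    rw [hcal, f1, f2]
    exact iff_of_true (by ring) ho
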